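/- PSL₂(ℤ) is isomorphic to the free product ℤ/3 * ℤ/2; consequently, conjugacy classes of finite-index subgroups of PSL₂(ℤ) are in bijection with isomorphism classes of transitive actions of ℤ/3 * ℤ/2 on finite sets with a marked point, up to change of marked point. -/

import Mathlib

open Matrix ModularGroup

local notation "SL2" => Matrix.SpecialLinearGroup (Fin 2) ℤ

namespace Stmt18

noncomputable def moeb (g : SL2) (x : ℝ) : ℝ :=
  ((g.1 0 0 : ℝ) * x + g.1 0 1) / ((g.1 1 0 : ℝ) * x + g.1 1 1)

lemma det_coe (g : SL2) : g.1 0 0 * g.1 1 1 - g.1 0 1 * g.1 1 0 = 1 := by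
  have := g.2
  rwa [Matrix.det_fin_two] at this

lemma denom_ne_zero (g : SL2) {x : ℝ} (hx : Irrational x) :
    (g.1 1 0 : ℝ) * x + g.1 1 1 ≠ 0 := by
  rcases eq_or_ne (g.1 1 0) 0 with h | h
  · have hdet := det_coe g
    rw [h] at hdet
    simp only [h, Int.cast_zero, zero_mul, zero_add]
    intro hd
    have h1 : g.1 1 1 = 0 := by exact_mod_cast hd
    rw [h1] at hdet
    simp at hdet
  · intro h0
    apply hx
    refine ⟨(-(g.1 1 1 : ℚ)) / (g.1 1 0 : ℚ), ?_⟩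
    have hc : (g.1 1 0 : ℝ) ≠ 0 := by exact_mod_cast h
    push_cast
    field_simp
    linarith

lemma moeb_irrational (g : SL2) {x : ℝ} (hx : Irrational x) : Irrational (moeb g x) := by
  rintro ⟨q, hq⟩
  have hden := denom_ne_zero g hx
  rw [moeb, eq_div_iff hden] at hq
  rcases eq_or_ne ((g.1 0 0 : ℝ) - q * g.1 1 0) 0 with h | h
  · -- a = q c, and then b = q d, contradicting det = 1
    have ha : (g.1 0 0 : ℝ) = q * g.1 1 0 := by linarith [sub_eq_zero.mp h]
    have hb : (g.1 0 1 : ℝ) = q * g.1 1 1 := by linear_combination -hq - x * (sub_eq_zero.mp h)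
    have hdet : ((g.1 0 0 : ℤ) * g.1 1 1 - g.1 0 1 * g.1 1 0 : ℤ) = 1 := det_coe g
    have hdetR : (g.1 0 0 : ℝ) * g.1 1 1 - (g.1 0 1 : ℝ) * g.1 1 0 = 1 := by
      exact_mod_cast hdet
    rw [ha, hb] at hdetR
    have h01 : (0:ℝ) = 1 := by linear_combination hdetR
    norm_num at h01
  · apply hx
    refine ⟨(q * g.1 1 1 - g.1 0 1) / ((g.1 0 0 : ℚ) - q * g.1 1 0), ?_⟩
    have h' : ((g.1 0 0 : ℚ) - q * g.1 1 0 : ℚ) ≠ 0 := by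
      intro h0
      apply h
      have := congrArg (Rat.cast (K := ℝ)) h0
      push_cast at this
      linarith
    push_cast
    rw [div_eq_iff (by exact_mod_cast h')]
    linear_combination hq

end Stmt18

namespace Stmt18

lemma moeb_one (x : ℝ) : moeb 1 x = x := by
  simp [moeb, Matrix.SpecialLinearGroup.coe_one]

lemma moeb_mul (g h : SL2) {x : ℝ} (hx : Irrational x) :
    moeb (g * h) x = moeb g (moeb h x) := by
  have hdh : ((h.1 1 0 : ℝ) * x + h.1 1 1) ≠ 0 := denom_ne_zero h hx
  have hy : Irrational (moeb h x) := moeb_irrational h hx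
  have hdg : ((g.1 1 0 : ℝ) * (moeb h x) + g.1 1 1) ≠ 0 := denom_ne_zero g hy
  have hdgh : (((g*h).1 1 0 : ℝ) * x + (g*h).1 1 1) ≠ 0 := denom_ne_zero (g*h) hx
  simp only [Matrix.SpecialLinearGroup.coe_mul, Matrix.mul_apply, Fin.sum_univ_two] at hdgh
  push_cast at hdgh
  set y := moeb h x with hy'
  have hyval : y = ((h.1 0 0 : ℝ) * x + h.1 0 1) / ((h.1 1 0 : ℝ) * x + h.1 1 1) := rfl
  have e1 : (g.1 0 0 : ℝ) * y + g.1 0 1 =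
      (((g.1 0 0 : ℝ) * h.1 0 0 + (g.1 0 1 : ℝ) * h.1 1 0) * x +
        ((g.1 0 0 : ℝ) * h.1 0 1 + (g.1 0 1 : ℝ) * h.1 1 1)) /
        ((h.1 1 0 : ℝ) * x + h.1 1 1) := by
    rw [hyval, eq_div_iff hdh, add_mul, mul_assoc (g.1 0 0 : ℝ), div_mul_cancel₀ _ hdh]; ring
  have e2 : (g.1 1 0 : ℝ) * y + g.1 1 1 =
      (((g.1 1 0 : ℝ) * h.1 0 0 + (g.1 1 1 : ℝ) * h.1 1 0) * x +
        ((g.1 1 0 : ℝ) * h.1 0 1 + (g.1 1 1 : ℝ) * h.1 1 1)) /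
        ((h.1 1 0 : ℝ) * x + h.1 1 1) := by
    rw [hyval, eq_div_iff hdh, add_mul, mul_assoc (g.1 1 0 : ℝ), div_mul_cancel₀ _ hdh]; ring
  rw [show moeb (g * h) x = (((g*h).1 0 0 : ℝ) * x + (g*h).1 0 1) / (((g*h).1 1 0 : ℝ) * x + (g*h).1 1 1) from rfl,
    show moeb g y = ((g.1 0 0 : ℝ) * y + g.1 0 1) / ((g.1 1 0 : ℝ) * y + g.1 1 1) from rfl, e1, e2]
  simp only [Matrix.SpecialLinearGroup.coe_mul, Matrix.mul_apply, Fin.sum_univ_two]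
  push_cast
  rw [div_div_div_cancel_right₀]
  · push_cast at hdh; exact hdh

end Stmt18

namespace Stmt18

def Irr : Type := {x : ℝ // Irrational x}

noncomputable instance : MulAction SL2 Irr where
  smul g x := ⟨moeb g x.1, moeb_irrational g x.2⟩
  one_smul x := Subtype.ext (moeb_one x.1)
  mul_smul g h x := Subtype.ext (moeb_mul g h x.2)

lemma smul_coe (g : SL2) (x : Irr) : (g • x : Irr).1 = moeb g x.1 := rfl

local notation "PSL2" => SL2 ⧸ Subgroup.center SL2

lemma center_smul (z : SL2) (hz : z ∈ Subgroup.center SL2) (x : Irr) : z • x = x := by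
  obtain ⟨r, hr, hscalar⟩ := Matrix.SpecialLinearGroup.mem_center_iff.mp hz
  have hr0 : r ≠ 0 := by
    intro h0; rw [h0] at hr; simpa using hr
  have h00 : z.1 0 0 = r := by
    rw [← hscalar, Matrix.scalar_apply, Matrix.diagonal_apply_eq]
  have h01 : z.1 0 1 = 0 := by
    rw [← hscalar, Matrix.scalar_apply, Matrix.diagonal_apply_ne _ (by decide)]
  have h10 : z.1 1 0 = 0 := by
    rw [← hscalar, Matrix.scalar_apply, Matrix.diagonal_apply_ne _ (by decide)]
  have h11 : z.1 1 1 = r := by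
    rw [← hscalar, Matrix.scalar_apply, Matrix.diagonal_apply_eq]
  apply Subtype.ext
  rw [smul_coe, moeb, h00, h01, h10, h11]
  have : (r : ℝ) ≠ 0 := Int.cast_ne_zero.mpr hr0
  simp only [Int.cast_zero, add_zero, mul_zero, zero_mul, zero_add]
  exact mul_div_cancel_left₀ _ this

/-- The permutation action homomorphism kills the center. -/
noncomputable def pslPerm : PSL2 →* Equiv.Perm Irr :=
  QuotientGroup.lift (Subgroup.center SL2) (MulAction.toPermHom SL2 Irr)
    (fun z hz => by
      ext x
      simpa [MulAction.toPermHom] using center_smul z hz x)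

noncomputable instance : MulAction PSL2 Irr := MulAction.compHom _ pslPerm

lemma psl_smul (g : SL2) (x : Irr) :
    ((g : SL2 ⧸ Subgroup.center SL2) • x) = g • x := rfl

end Stmt18

namespace Stmt18

lemma S_mem : (S : SL2) ∈ Subgroup.closure ({S, T} : Set SL2) :=
  Subgroup.subset_closure (by simp)

lemma T_zpow_mem (n : ℤ) : (T : SL2) ^ n ∈ Subgroup.closure ({S, T} : Set SL2) :=
  Subgroup.zpow_mem _ (Subgroup.subset_closure (by simp)) n

lemma mem_closure_aux : ∀ n : ℕ, ∀ A : SL2, (A.1 1 0).natAbs = n →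
    A ∈ Subgroup.closure ({S, T} : Set SL2) := by
  intro n
  induction n using Nat.strong_induction_on with
  | _ n IH =>
    intro A hA
    have hdet : A.1 0 0 * A.1 1 1 - A.1 0 1 * A.1 1 0 = 1 := by
      have := A.2; rwa [Matrix.det_fin_two] at this
    rcases eq_or_ne (A.1 1 0) 0 with hc | hc
    · -- c = 0 : A = ± T^b
      rw [hc, mul_zero, sub_zero] at hdet
      rcases Int.mul_eq_one_iff_eq_one_or_neg_one.mp hdet with ⟨ha, hd⟩ | ⟨ha, hd⟩
      · have : A = (T : SL2) ^ (A.1 0 1) := by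
          apply Subtype.ext
          rw [coe_T_zpow]
          ext i j
          fin_cases i <;> fin_cases j <;> simp [ha, hd, hc]
        rw [this]; exact T_zpow_mem _
      · have : A = S * S * (T : SL2) ^ (-(A.1 0 1)) := by
          apply Subtype.ext
          simp only [Matrix.SpecialLinearGroup.coe_mul, coe_T_zpow, ModularGroup.coe_S]
          ext i j
          fin_cases i <;> fin_cases j <;>
            simp [Matrix.mul_apply, Fin.sum_univ_two, ha, hd, hc]
        rw [this]
        exact Subgroup.mul_mem _ (Subgroup.mul_mem _ S_mem S_mem) (T_zpow_mem _)
    · -- c ≠ 0 : Euclidean step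
      set a := A.1 0 0 with ha'
      set c := A.1 1 0 with hc'
      set q : ℤ := -(a / c) with hq'
      set B := S * ((T : SL2) ^ q * A) with hB'
      have hBc : B.1 1 0 = a % c := by
        simp only [hB', Matrix.SpecialLinearGroup.coe_mul, coe_T_zpow, ModularGroup.coe_S,
          Matrix.mul_apply, Fin.sum_univ_two]
        simp [Matrix.cons_val_zero, Matrix.cons_val_one]
        rw [Int.emod_def]
        ring
      have hmod : (a % c).natAbs < n := by
        have h1 : a % c = a % |c| := by
          rcases abs_cases c with ⟨h, _⟩ | ⟨h, _⟩
          · rw [h]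
          · rw [h, Int.emod_neg]
        have h2 : 0 ≤ a % |c| := Int.emod_nonneg _ (by simpa using hc)
        have h3 : a % |c| < |c| := Int.emod_lt_of_pos _ (by simpa using abs_pos.mpr hc)
        have h4 : |c| = (c.natAbs : ℤ) := Int.abs_eq_natAbs c
        rw [← hA, h1]
        omega
      have hBmem : B ∈ Subgroup.closure ({S, T} : Set SL2) := by
        apply IH _ (by rw [hBc]; exact hmod) B rfl
      have hAeq : A = ((T : SL2) ^ q)⁻¹ * (S⁻¹ * B) := by
        rw [hB']; group
      rw [hAeq]
      exact Subgroup.mul_mem _ (Subgroup.inv_mem _ (T_zpow_mem _))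
        (Subgroup.mul_mem _ (Subgroup.inv_mem _ S_mem) hBmem)

lemma closure_ST : Subgroup.closure ({S, T} : Set SL2) = ⊤ := by
  rw [Subgroup.eq_top_iff']
  intro A
  exact mem_closure_aux _ A rfl

end Stmt18
namespace Stmt18


def zmodHom {G : Type*} [Group G] (n : ℕ) [NeZero n] (g : G) (h : g ^ n = 1) :
    Multiplicative (ZMod n) →* G where
  toFun x := g ^ (x.toAdd.val)
  map_one' := by
    show g ^ ((0 : ZMod n).val) = 1
    simp [ZMod.val_zero]
  map_mul' x y := by
    show g ^ ((x.toAdd + y.toAdd).val) = g ^ x.toAdd.val * g ^ y.toAdd.val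
    rw [ZMod.val_add, ← pow_eq_pow_mod _ h, pow_add]

@[simp] lemma zmodHom_apply {G : Type*} [Group G] (n : ℕ) [NeZero n] (g : G) (h : g ^ n = 1)
    (x : Multiplicative (ZMod n)) : zmodHom n g h x = g ^ (x.toAdd.val) := rfl

def negOne : SL2 := ⟨-1, by norm_num [Matrix.det_neg]⟩

lemma neg_one_mem_center : negOne ∈ Subgroup.center SL2 := by
  rw [Matrix.SpecialLinearGroup.mem_center_iff]
  exact ⟨-1, by norm_num, by rw [map_neg, _root_.map_one]; rfl⟩

lemma S_sq' : (S : SL2) ^ 2 = negOne := by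
  apply Subtype.ext
  show ((S : SL2)^2).1 = -1
  rw [pow_two, Matrix.SpecialLinearGroup.coe_mul, ModularGroup.coe_S]
  ext i j
  fin_cases i <;> fin_cases j <;> norm_num [Matrix.mul_apply, Fin.sum_univ_two]

lemma TS_cube : ((T * S : SL2)) ^ 3 = negOne := by
  apply Subtype.ext
  show (((T*S) : SL2)^3).1 = -1
  have hTS : ((T*S : SL2)).1 = !![1, -1; 1, 0] := by
    rw [Matrix.SpecialLinearGroup.coe_mul, ModularGroup.coe_S, ModularGroup.coe_T]
    ext i j
    fin_cases i <;> fin_cases j <;> norm_num [Matrix.mul_apply, Fin.sum_univ_two]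
  rw [pow_succ, pow_succ, pow_one, Matrix.SpecialLinearGroup.coe_mul,
    Matrix.SpecialLinearGroup.coe_mul, hTS]
  ext i j
  fin_cases i <;> fin_cases j <;> norm_num [Matrix.mul_apply, Fin.sum_univ_two]

lemma TS_sq_coe : (((T * S : SL2)) ^ 2).1 = !![0, -1; 1, -1] := by
  have hTS : ((T*S : SL2)).1 = !![1, -1; 1, 0] := by
    rw [Matrix.SpecialLinearGroup.coe_mul, ModularGroup.coe_S, ModularGroup.coe_T]
    ext i j
    fin_cases i <;> fin_cases j <;> norm_num [Matrix.mul_apply, Fin.sum_univ_two]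
  rw [pow_two, Matrix.SpecialLinearGroup.coe_mul, hTS]
  ext i j
  fin_cases i <;> fin_cases j <;> norm_num [Matrix.mul_apply, Fin.sum_univ_two]

end Stmt18

namespace Stmt18

local notation "PSL2" => SL2 ⧸ Subgroup.center SL2

noncomputable def π : SL2 →* PSL2 := QuotientGroup.mk' (Subgroup.center SL2)

lemma a3_cube : (π (T * S)) ^ 3 = 1 := by
  rw [← map_pow, TS_cube]
  exact (QuotientGroup.eq_one_iff _).mpr neg_one_mem_center

lemma a2_sq : (π S) ^ 2 = 1 := by
  rw [← map_pow, S_sq']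
  exact (QuotientGroup.eq_one_iff _).mpr neg_one_mem_center

noncomputable def f3 : Multiplicative (ZMod 3) →* PSL2 := zmodHom 3 (π (T * S)) a3_cube
noncomputable def f2 : Multiplicative (ZMod 2) →* PSL2 := zmodHom 2 (π S) a2_sq

noncomputable def f : Monoid.Coprod (Multiplicative (ZMod 3)) (Multiplicative (ZMod 2)) →* PSL2 :=
  Monoid.Coprod.lift f3 f2

lemma f_surjective : Function.Surjective f := by
  intro y
  obtain ⟨A, rfl⟩ := QuotientGroup.mk'_surjective (Subgroup.center SL2) y
  show ∃ x, f x = π A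
  have hA : A ∈ Subgroup.closure ({S, T} : Set SL2) := by rw [closure_ST]; trivial
  have key : π A ∈ f.range := by
    induction hA using Subgroup.closure_induction with
    | mem g hg =>
      rcases hg with rfl | rfl
      · exact ⟨Monoid.Coprod.inr (Multiplicative.ofAdd (1 : ZMod 2)), by
          simp [f, Monoid.Coprod.lift_apply_inr, f2, ZMod.val_one]⟩
      · -- T = (T*S) * S⁻¹ ; π T = π (T*S) * (π S)⁻¹
        have : π T = π (T * S) * (π S)⁻¹ := by
          rw [← _root_.map_inv, ← _root_.map_mul]
          congr 1
          group
        rw [this]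
        refine Subgroup.mul_mem _ ⟨Monoid.Coprod.inl (Multiplicative.ofAdd (1 : ZMod 3)), by
          simp [f, Monoid.Coprod.lift_apply_inl, f3, ZMod.val_one]⟩ (Subgroup.inv_mem _ ?_)
        exact ⟨Monoid.Coprod.inr (Multiplicative.ofAdd (1 : ZMod 2)), by
          simp [f, Monoid.Coprod.lift_apply_inr, f2, ZMod.val_one]⟩
    | one => exact Subgroup.one_mem _
    | mul g h _ _ hg hh => rw [_root_.map_mul]; exact Subgroup.mul_mem _ hg hh
    | inv g _ hg => rw [_root_.map_inv]; exact Subgroup.inv_mem _ hg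
  exact key

end Stmt18

namespace Stmt18

local notation "PSL2" => SL2 ⧸ Subgroup.center SL2

lemma coe_TS : ((T * S : SL2)).1 = !![1, -1; 1, 0] := by
  rw [Matrix.SpecialLinearGroup.coe_mul, ModularGroup.coe_S, ModularGroup.coe_T]
  ext i j
  fin_cases i <;> fin_cases j <;> norm_num [Matrix.mul_apply, Fin.sum_univ_two]

lemma moeb_S {x : ℝ} : moeb S x = -1 / x := by
  rw [moeb, ModularGroup.coe_S]
  norm_num

lemma moeb_TS {x : ℝ} : moeb (T * S) x = (x - 1) / x := by
  rw [moeb, coe_TS]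
  norm_num
  ring_nf

lemma moeb_TS_sq {x : ℝ} : moeb ((T * S) ^ 2) x = -1 / (x - 1) := by
  rw [moeb, TS_sq_coe]
  norm_num
  ring_nf


end Stmt18

namespace Stmt18

open Pointwise

local notation "PSL2" => SL2 ⧸ Subgroup.center SL2

noncomputable def gen : Bool → PSL2 := fun b => cond b (π (T * S)) (π S)

lemma gen_pow (b : Bool) : gen b ^ (cond b 3 2 : ℕ) = 1 := by
  cases b
  · exact a2_sq
  · exact a3_cube

instance (b : Bool) : NeZero (cond b 3 2 : ℕ) := by cases b <;> exact ⟨by norm_num⟩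

noncomputable def fam : ∀ b : Bool, Multiplicative (ZMod (cond b 3 2)) →* PSL2 :=
  fun b => zmodHom _ (gen b) (gen_pow b)

def XX : Bool → Set Irr := fun b => cond b {x | 0 < x.1} {x | x.1 < 0}

lemma smul_val (g : SL2) (x : Irr) : ((π g) • x).1 = moeb g x.1 := rfl

lemma hXne : ∀ b, (XX b).Nonempty := by
  intro b
  cases b
  · exact ⟨⟨-Real.sqrt 2, irrational_sqrt_two.neg⟩, by
      simp only [XX, cond]
      have := Real.sqrt_pos.mpr (by norm_num : (0:ℝ) < 2)
      show -Real.sqrt 2 < 0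
      linarith⟩
  · exact ⟨⟨Real.sqrt 2, irrational_sqrt_two⟩, by
      simp only [XX, cond]
      exact Real.sqrt_pos.mpr (by norm_num)⟩

lemma hXdisj : Pairwise (Function.onFun Disjoint XX) := by
  intro i j hij
  cases i <;> cases j <;> first
    | exact absurd rfl hij
    | · simp only [Function.onFun]
        rw [Set.disjoint_left]
        rintro x hx hx'
        simp only [XX, cond, Set.mem_setOf_eq] at hx hx'
        linarith

lemma hpp : Pairwise fun i j => ∀ h : Multiplicative (ZMod (cond i 3 2)),
    h ≠ 1 → fam i h • XX j ⊆ XX i := by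
  have v2 : ∀ z : ZMod 2, z ≠ 0 → z.val = 1 := by decide
  have v3 : ∀ z : ZMod 3, z ≠ 0 → z.val = 1 ∨ z.val = 2 := by decide
  intro i j hij h hne
  rintro _ ⟨x, hx, rfl⟩
  have hne' : h.toAdd ≠ 0 := fun h0 => hne (by
    apply Multiplicative.toAdd.injective; simpa using h0)
  cases i
  · cases j
    · exact absurd rfl hij
    have hval : (h.toAdd).val = 1 := v2 h.toAdd hne'
    simp only [XX, cond, Set.mem_setOf_eq] at hx ⊢
    show ((π S ^ (h.toAdd.val)) • x).1 < 0
    rw [hval, pow_one, smul_val, moeb_S]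
    exact div_neg_of_neg_of_pos (by norm_num) hx
  · cases j
    swap
    · exact absurd rfl hij
    simp only [XX, cond, Set.mem_setOf_eq] at hx ⊢
    show 0 < ((π (T * S) ^ (h.toAdd.val)) • x).1
    rcases v3 h.toAdd hne' with hval | hval
    · rw [hval, pow_one, smul_val, moeb_TS]
      exact div_pos_of_neg_of_neg (by linarith) hx
    · rw [hval, ← _root_.map_pow, smul_val, moeb_TS_sq]
      exact div_pos_of_neg_of_neg (by norm_num) (by linarith)

end Stmt18

namespace Stmt18

open Monoid

local notation "PSL2" => SL2 ⧸ Subgroup.center SL2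

lemma famLift_injective : Function.Injective (CoprodI.lift fam) := by
  apply CoprodI.lift_injective_of_ping_pong fam _ XX hXne hXdisj hpp
  right
  refine ⟨true, ?_⟩
  rw [Cardinal.mk_fintype]
  norm_num

noncomputable def φ : Coprod (Multiplicative (ZMod 3)) (Multiplicative (ZMod 2)) →*
    CoprodI (fun b : Bool => Multiplicative (ZMod (cond b 3 2))) :=
  Coprod.lift
    (CoprodI.of (M := fun b : Bool => Multiplicative (ZMod (cond b 3 2))) (i := true))
    (CoprodI.of (M := fun b : Bool => Multiplicative (ZMod (cond b 3 2))) (i := false))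

noncomputable def ψf : ∀ b : Bool, Multiplicative (ZMod (cond b 3 2)) →*
    Coprod (Multiplicative (ZMod 3)) (Multiplicative (ZMod 2)) := fun b => match b with
  | true => Coprod.inl
  | false => Coprod.inr

noncomputable def ψ : CoprodI (fun b : Bool => Multiplicative (ZMod (cond b 3 2))) →*
    Coprod (Multiplicative (ZMod 3)) (Multiplicative (ZMod 2)) :=
  CoprodI.lift ψf

lemma ψφ : ∀ y, ψ (φ y) = y := by
  intro y
  have : ψ.comp φ = MonoidHom.id _ := by
    apply Coprod.hom_ext
    · ext m
      simp only [MonoidHom.comp_apply, MonoidHom.id_apply, φ, Coprod.lift_apply_inl]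
      exact Monoid.CoprodI.lift_of (i := true) ψf m
    · ext m
      simp only [MonoidHom.comp_apply, MonoidHom.id_apply, φ, Coprod.lift_apply_inr]
      exact Monoid.CoprodI.lift_of (i := false) ψf m
  exact DFunLike.congr_fun this y

lemma f_eq : (CoprodI.lift fam).comp φ = f := by
  apply Coprod.hom_ext
  · ext m
    simp [φ, f, Coprod.lift_apply_inl]
    rfl
  · ext m
    simp [φ, f, Coprod.lift_apply_inr]
    rfl

lemma f_injective : Function.Injective f := by
  rw [← f_eq]
  exact famLift_injective.comp (fun a b hab => by rw [← ψφ a, ← ψφ b, hab])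

end Stmt18

/-- `PSL₂(ℤ)`, the quotient of `SL₂(ℤ)` by its center, is isomorphic to the
free product `ℤ/3 ∗ ℤ/2`. -/
theorem stmt_18 :
    Nonempty
      ((Matrix.SpecialLinearGroup (Fin 2) ℤ ⧸
          Subgroup.center (Matrix.SpecialLinearGroup (Fin 2) ℤ)) ≃*
        Monoid.Coprod (Multiplicative (ZMod 3)) (Multiplicative (ZMod 2))) := by
  exact ⟨(MulEquiv.ofBijective Stmt18.f ⟨Stmt18.f_injective, Stmt18.f_surjective⟩).symm⟩
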